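/- Let H be a 3-uniform hypergraph with no linear cycle and let h_1, h_2 be thick hyperedges of H. If two vertices of h_2 are strongly associated to h_1, then |h_1 ∩ h_2| = 1. -/
import Mathlib


/-- A linear cycle of length `k ≥ 3` in a 3-uniform hypergraph with edge set `E`:
an alternating cyclic sequence of distinct vertices `v i` and distinct hyperedges `h i`
with `h i ∩ h (i+1) = {v (i+1)}` and non-consecutive hyperedges disjoint. -/
def IsLinearCycle {V : Type*} [DecidableEq V] (E : Finset (Finset V)) (k : ℕ)
    (v : ZMod k → V) (h : ZMod k → Finset V) : Prop :=
  3 ≤ k ∧ Function.Injective v ∧ Function.Injective h ∧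
    (∀ i, h i ∈ E) ∧ (∀ i, h i ∩ h (i + 1) = {v (i + 1)}) ∧
    (∀ i j, i ≠ j → i + 1 ≠ j → j + 1 ≠ i → h i ∩ h j = ∅)

/-- `E` contains a linear cycle. -/
def HasLinearCycle {V : Type*} [DecidableEq V] (E : Finset (Finset V)) : Prop :=
  ∃ (k : ℕ) (v : ZMod k → V) (h : ZMod k → Finset V), IsLinearCycle E k v h

/-- The degree of a vertex: the number of hyperedges containing it. -/
def hDegree {V : Type*} [DecidableEq V] (E : Finset (Finset V)) (v : V) : ℕ :=
  (E.filter (fun e => v ∈ e)).card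

/-- The support of a vertex `v` in a hyperedge `h`: the pairs of `h` that form a
hyperedge together with `v`. -/
def hSupport {V : Type*} [DecidableEq V] (E : Finset (Finset V)) (h : Finset V) (v : V) :
    Finset (Finset V) :=
  (h.powersetCard 2).filter (fun p => insert v p ∈ E)

/-- A pair of vertices is thick if at least two hyperedges contain it. -/
def ThickPair {V : Type*} [DecidableEq V] (E : Finset (Finset V)) (a b : V) : Prop :=
  2 ≤ (E.filter (fun e => a ∈ e ∧ b ∈ e)).card

/-- A hyperedge is thick if each of its pairs is contained in at least two hyperedges. -/
def ThickEdge {V : Type*} [DecidableEq V] (E : Finset (Finset V)) (h : Finset V) : Prop :=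
  ∀ p ∈ h.powersetCard 2, 2 ≤ (E.filter (fun e => p ⊆ e)).card

/-- `v ∉ h` is strongly associated to the hyperedge `h` if at least two of the 3-sets
formed by `v` and a pair of `h` are hyperedges. -/
def StronglyAssoc {V : Type*} [DecidableEq V] (E : Finset (Finset V)) (h : Finset V) (v : V) :
    Prop :=
  v ∉ h ∧ 2 ≤ (hSupport E h v).card

/-- A linear path of length `k` (given by its sequence of hyperedges): consecutive
hyperedges meet in exactly one vertex, non-consecutive ones are disjoint. -/
def IsLinearPath {V : Type*} [DecidableEq V] (E : Finset (Finset V)) (k : ℕ)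
    (h : Fin k → Finset V) : Prop :=
  Function.Injective h ∧ (∀ i, h i ∈ E) ∧
    (∀ i j : Fin k, (i : ℕ) + 1 = (j : ℕ) → (h i ∩ h j).card = 1) ∧
    (∀ i j : Fin k, (i : ℕ) + 2 ≤ (j : ℕ) → h i ∩ h j = ∅)

/-- A linear tree with vertex set `S` and edge set `T`: built from a single vertex by
repeatedly adding hyperedges meeting the current vertex set in exactly one vertex. -/
inductive IsLinearTree {V : Type*} [DecidableEq V] : Finset V → Finset (Finset V) → Prop
  | single (v : V) : IsLinearTree {v} ∅
  | extend {S : Finset V} {T : Finset (Finset V)} (e : Finset V) :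
      IsLinearTree S T → e.card = 3 → (e ∩ S).card = 1 → IsLinearTree (S ∪ e) (insert e T)

/-- If two vertices of a thick hyperedge `h₂` are strongly associated to a thick
hyperedge `h₁` of a linear-cycle-free hypergraph, then `|h₁ ∩ h₂| = 1`. -/
theorem inter_card_one_of_two_strong {V : Type*} [DecidableEq V] (E : Finset (Finset V))
    (h3 : ∀ e ∈ E, e.card = 3) (hcyc : ¬ HasLinearCycle E) (h₁ h₂ : Finset V)
    (hh1 : h₁ ∈ E) (hh2 : h₂ ∈ E) (ht1 : ThickEdge E h₁) (ht2 : ThickEdge E h₂)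
    (p q : V) (hp2 : p ∈ h₂) (hq2 : q ∈ h₂) (hpq : p ≠ q)
    (hp : StronglyAssoc E h₁ p) (hq : StronglyAssoc E h₁ q) :
    (h₁ ∩ h₂).card = 1 := by
  obtain ⟨hp1, hps⟩ := hp
  obtain ⟨hq1, hqs⟩ := hq
  have h2card : h₂.card = 3 := h3 h₂ hh2
  have h1card : h₁.card = 3 := h3 h₁ hh1
  -- choose support pairs
  obtain ⟨Pp, hPpmem⟩ := Finset.card_pos.mp (lt_of_lt_of_le (by norm_num) hps)
  obtain ⟨Pq, hPqmem, hPqne⟩ :=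
    Finset.exists_mem_ne (lt_of_lt_of_le one_lt_two hqs) Pp
  rw [hSupport, Finset.mem_filter, Finset.mem_powersetCard] at hPpmem hPqmem
  obtain ⟨⟨hPpsub, hPpcard⟩, hPpE⟩ := hPpmem
  obtain ⟨⟨hPqsub, hPqcard⟩, hPqE⟩ := hPqmem
  -- the two pairs meet in exactly one vertex
  obtain ⟨x, hx⟩ : ∃ x, Pp ∩ Pq = {x} := by
    rw [← Finset.card_eq_one]
    have hu : (Pp ∪ Pq).card ≤ 3 :=
      h1card ▸ Finset.card_le_card (Finset.union_subset hPpsub hPqsub)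
    have hiu := Finset.card_inter_add_card_union Pp Pq
    have hle : (Pp ∩ Pq).card ≤ 2 :=
      hPpcard ▸ Finset.card_le_card Finset.inter_subset_left
    rcases Nat.lt_or_ge (Pp ∩ Pq).card 2 with h|h
    · omega
    · exfalso
      have e1 : Pp ∩ Pq = Pp :=
        Finset.eq_of_subset_of_card_le Finset.inter_subset_left (by omega)
      have e2 : Pp ∩ Pq = Pq :=
        Finset.eq_of_subset_of_card_le Finset.inter_subset_right (by omega)
      exact hPqne (e2 ▸ e1)
  have hxPp : x ∈ Pp := Finset.inter_subset_left (hx ▸ Finset.mem_singleton_self x)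
  have hxPq : x ∈ Pq := Finset.inter_subset_right (hx ▸ Finset.mem_singleton_self x)
  have hx1 : x ∈ h₁ := hPpsub hxPp
  have hpx : p ≠ x := fun h => hp1 (h ▸ hx1)
  have hqx : q ≠ x := fun h => hq1 (h ▸ hx1)
  -- upper bound on the intersection
  have hsub : h₁ ∩ h₂ ⊆ h₂ \ {p, q} := by
    intro a ha
    rw [Finset.mem_inter] at ha
    simp only [Finset.mem_sdiff, Finset.mem_insert, Finset.mem_singleton]
    refine ⟨ha.2, ?_⟩
    rintro (rfl|rfl)
    · exact hp1 ha.1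
    · exact hq1 ha.1
  have hpqsub : ({p, q} : Finset V) ⊆ h₂ := by
    intro a ha
    rcases Finset.mem_insert.mp ha with rfl|ha
    · exact hp2
    · exact (Finset.mem_singleton.mp ha) ▸ hq2
  have hub : (h₁ ∩ h₂).card ≤ 1 := by
    have h1' := Finset.card_le_card hsub
    have h2' : (h₂ \ {p,q}).card = 1 := by
      rw [Finset.card_sdiff_of_subset hpqsub, Finset.card_pair hpq, h2card]
    omega
  by_contra hne
  have hempty : h₁ ∩ h₂ = ∅ := by
    rw [← Finset.card_eq_zero]
    omega
  have hdis : ∀ a, a ∈ h₁ → a ∉ h₂ := fun a ha1 ha2 =>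
    (Finset.eq_empty_iff_forall_notMem.mp hempty a) (Finset.mem_inter.mpr ⟨ha1, ha2⟩)
  have hpPq : p ∉ Pq := fun h => hp1 (hPqsub h)
  have hqPp : q ∉ Pp := fun h => hq1 (hPpsub h)
  -- the three edges of the cycle
  have hE1 : insert p Pp ∈ E := hPpE
  have hE2 : insert q Pq ∈ E := hPqE
  have I1 : h₂ ∩ insert p Pp = {p} := by
    ext a
    simp only [Finset.mem_inter, Finset.mem_insert, Finset.mem_singleton]
    constructor
    · rintro ⟨ha2, rfl|haPp⟩
      · rfl
      · exact absurd ha2 (hdis a (hPpsub haPp))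
    · rintro rfl
      exact ⟨hp2, Or.inl rfl⟩
  have I2 : insert p Pp ∩ insert q Pq = {x} := by
    ext a
    simp only [Finset.mem_inter, Finset.mem_insert, Finset.mem_singleton]
    constructor
    · rintro ⟨rfl|haPp, rfl|haPq⟩
      · exact absurd rfl hpq
      · exact absurd haPq hpPq
      · exact absurd haPp hqPp
      · exact Finset.mem_singleton.mp (hx ▸ Finset.mem_inter.mpr ⟨haPp, haPq⟩)
    · rintro rfl
      exact ⟨Or.inr hxPp, Or.inr hxPq⟩
  have I3 : insert q Pq ∩ h₂ = {q} := by
    ext a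
    simp only [Finset.mem_inter, Finset.mem_insert, Finset.mem_singleton]
    constructor
    · rintro ⟨rfl|haPq, ha2⟩
      · rfl
      · exact absurd ha2 (hdis a (hPqsub haPq))
    · rintro rfl
      exact ⟨Or.inl rfl, hq2⟩
  -- distinctness of the edges
  have c1 : (insert p Pp).card = 3 := h3 _ hE1
  have c2 : (insert q Pq).card = 3 := h3 _ hE2
  have d1 : h₂ ≠ insert p Pp := by
    intro heq
    rw [heq, Finset.inter_self] at I1
    have := congrArg Finset.card I1
    rw [c1, Finset.card_singleton] at this
    omega
  have d2 : insert p Pp ≠ insert q Pq := by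
    intro heq
    rw [heq, Finset.inter_self] at I2
    have := congrArg Finset.card I2
    rw [c2, Finset.card_singleton] at this
    omega
  have d3 : h₂ ≠ insert q Pq := by
    intro heq
    rw [← heq, Finset.inter_self] at I3
    have := congrArg Finset.card I3
    rw [h2card, Finset.card_singleton] at this
    omega
  -- build the linear 3-cycle
  apply hcyc
  have hcases : ∀ i : ZMod 3, i = 0 ∨ i = 1 ∨ i = 2 := by decide
  have a1 : (0+1 : ZMod 3) = 1 := by decide
  have a2 : (1+1 : ZMod 3) = 2 := by decide
  have a3 : (2+1 : ZMod 3) = 0 := by decide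
  set v : ZMod 3 → V := fun i => if i = 0 then q else if i = 1 then p else x with hv
  set e : ZMod 3 → Finset V :=
    fun i => if i = 0 then h₂ else if i = 1 then insert p Pp else insert q Pq with he
  have hv0 : v 0 = q := by simp only [hv, if_pos rfl]
  have hv1 : v 1 = p := by
    simp only [hv, if_neg (show (1:ZMod 3) ≠ 0 by decide), if_pos rfl]; simp
  have hv2 : v 2 = x := by
    simp only [hv, if_neg (show (2:ZMod 3) ≠ 0 by decide),
      if_neg (show (2:ZMod 3) ≠ 1 by decide)]
  have he0 : e 0 = h₂ := by simp only [he, if_pos rfl]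
  have he1 : e 1 = insert p Pp := by
    simp only [he, if_neg (show (1:ZMod 3) ≠ 0 by decide), if_pos rfl]; simp
  have he2 : e 2 = insert q Pq := by
    simp only [he, if_neg (show (2:ZMod 3) ≠ 0 by decide),
      if_neg (show (2:ZMod 3) ≠ 1 by decide)]
  refine ⟨3, v, e, le_refl 3, ?_, ?_, ?_, ?_, ?_⟩
  · intro i j hij
    rcases hcases i with rfl|rfl|rfl <;> rcases hcases j with rfl|rfl|rfl <;>
      simp_all
  · intro i j hij
    rcases hcases i with rfl|rfl|rfl <;> rcases hcases j with rfl|rfl|rfl <;>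
      simp_all
  · intro i
    rcases hcases i with rfl|rfl|rfl <;>
      simp only [he0, he1, he2] <;> assumption
  · intro i
    rcases hcases i with rfl|rfl|rfl <;>
      simp only [a1, a2, a3, he0, he1, he2, hv0, hv1, hv2] <;> assumption
  · intro i j hij hij1 hij2
    exfalso
    revert i j
    decide
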